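/- Let u and v be strings, and suppose t_1 < t_2 < ... < t_h (h ≥ 3) are all the starting positions of occurrences of u in v, satisfying t_{i+2} - t_i ≤ |u| for all i ∈ [1..h-2]. Then the sequence t_1,...,t_h forms an arithmetic progression whose common difference equals the period length of u. -/

import Mathlib

private lemma fw_sub {β : Type*} {n a b : ℕ} {f : ℕ → β}
    (hab : a ≤ b) (hn : a + b ≤ n)
    (ha : ∀ j, j + a < n → f j = f (j + a))
    (hb : ∀ j, j + b < n → f j = f (j + b)) :
    ∀ j, j + (b - a) < n → f j = f (j + (b - a)) := by
  intro x hx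
  by_cases hxb : x + b < n
  · have h1 := hb x hxb
    have h2 := ha (x + (b - a)) (by omega)
    have e : x + (b - a) + a = x + b := by omega
    rw [e] at h2
    rw [h1, h2]
  · have hax : a ≤ x := by omega
    obtain ⟨y, rfl⟩ := Nat.exists_eq_add_of_le hax
    have h1 := ha y (by omega)
    have h2 := hb y (by omega)
    have e1 : y + a = a + y := by omega
    have e2 : y + b = a + y + (b - a) := by omega
    rw [e1] at h1; rw [e2] at h2
    rw [← h1, h2]

private lemma fw {β : Type*} {n : ℕ} {f : ℕ → β} :
    ∀ s a b, a + b ≤ s → a + b ≤ n →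
    (∀ j, j + a < n → f j = f (j + a)) →
    (∀ j, j + b < n → f j = f (j + b)) →
    ∀ j, j + Nat.gcd a b < n → f j = f (j + Nat.gcd a b) := by
  intro s
  induction s using Nat.strong_induction_on with
  | _ s ih =>
    intro a b hs hn ha hb
    rcases Nat.eq_zero_or_pos a with rfl | hapos
    · simpa using hb
    rcases Nat.eq_zero_or_pos b with rfl | hbpos
    · simpa using ha
    rcases le_total a b with hab | hab
    · have hsub := fw_sub hab hn ha hb
      have hg : Nat.gcd a (b - a) = Nat.gcd a b := Nat.gcd_sub_self_right hab
      intro j hj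
      rw [← hg] at hj ⊢
      exact ih (a + (b - a)) (by omega) a (b - a) le_rfl (by omega) ha hsub j hj
    · have hsub := fw_sub hab (by omega) hb ha
      have hg : Nat.gcd b (a - b) = Nat.gcd a b := by
        rw [Nat.gcd_sub_self_right hab, Nat.gcd_comm]
      intro j hj
      rw [← hg] at hj ⊢
      exact ih (b + (a - b)) (by omega) b (a - b) le_rfl (by omega) hb hsub j hj

/-- Breslauer–Galil: if `t 0 < t 1 < ⋯ < t (h-1)` (with `h ≥ 3`) are all the occurrences
of `u` in `v` and `t (i+2) - t i ≤ |u|` for all `i`, then the occurrences form an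
arithmetic progression whose common difference is the period length of `u`. -/
theorem stmt2 {α : Type*} [DecidableEq α] (u v : List α) (h : ℕ) (hh : 3 ≤ h)
    (t : ℕ → ℕ)
    (hmono : ∀ i j, i < j → j < h → t i < t j)
    (hocc : ∀ p, ((v.drop p).take u.length = u ∧ p + u.length ≤ v.length) ↔
      ∃ i < h, t i = p)
    (hdense : ∀ i, i + 2 < h → t (i + 2) - t i ≤ u.length) :
    ∃ d, (∀ i, i + 1 < h → t (i + 1) - t i = d) ∧
      0 < d ∧ (∀ j, j + d < u.length → u[j]? = u[j + d]?) ∧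
      (∀ p, 0 < p → (∀ j, j + p < u.length → u[j]? = u[j + p]?) → d ≤ p) := by
  classical
  set n := u.length with hn
  have hlen : 0 < n := by
    have h02 := hmono 0 (0 + 2) (by omega) (by omega)
    have hd0 := hdense 0 (by omega)
    omega
  -- occurrences elementwise
  have hoccget : ∀ i, i < h → ∀ j, j < n → u[j]? = v[t i + j]? := by
    intro i hi j hj
    obtain ⟨heq, _⟩ := (hocc (t i)).mpr ⟨i, hi, rfl⟩
    calc u[j]? = ((v.drop (t i)).take n)[j]? := by rw [heq]
      _ = (v.drop (t i))[j]? := by rw [List.getElem?_take, if_pos hj]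
      _ = v[t i + j]? := List.getElem?_drop
  have hbound : ∀ i, i < h → t i + n ≤ v.length := fun i hi =>
    ((hocc (t i)).mpr ⟨i, hi, rfl⟩).2
  -- the minimal period d
  have hQ : ∃ p, 0 < p ∧ ∀ j, j + p < n → u[j]? = u[j + p]? :=
    ⟨n, hlen, fun j hj => absurd hj (by omega)⟩
  obtain ⟨d, hdpos, hdper, hmin⟩ :
      ∃ d, 0 < d ∧ (∀ j, j + d < n → u[j]? = u[j + d]?) ∧
        (∀ p, 0 < p → (∀ j, j + p < n → u[j]? = u[j + p]?) → d ≤ p) :=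
    ⟨Nat.find hQ, (Nat.find_spec hQ).1, (Nat.find_spec hQ).2,
      fun p h1 h2 => Nat.find_min' hQ ⟨h1, h2⟩⟩
  -- differences of occurrences are periods
  have hdiffP : ∀ i j, i < h → j < h → t i ≤ t j →
      ∀ x, x + (t j - t i) < n → u[x]? = u[x + (t j - t i)]? := by
    intro i j hi hj hij x hx
    have e1 := hoccget j hj x (by omega)
    have e2 := hoccget i hi (x + (t j - t i)) hx
    have e : t i + (x + (t j - t i)) = t j + x := by omega
    rw [e] at e2
    rw [e2, e1]
  have hgapQ : ∀ i, i + 1 < h → 0 < t (i + 1) - t i ∧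
      ∀ x, x + (t (i + 1) - t i) < n → u[x]? = u[x + (t (i + 1) - t i)]? := by
    intro i hi
    have := hmono i (i + 1) (by omega) hi
    exact ⟨by omega, hdiffP i (i + 1) (by omega) hi (by omega)⟩
  -- d plus each gap is at most n
  have hsum : ∀ i, i + 1 < h → d + (t (i + 1) - t i) ≤ n := by
    intro i hi
    by_cases hc : i + 2 < h
    · have h1 := hmin _ (hgapQ (i + 1) hc).1 (hgapQ (i + 1) hc).2
      have h2 := hdense i hc
      have m1 := hmono i (i + 1) (by omega) (by omega)
      have m2 := hmono (i + 1) (i + 2) (by omega) hc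
      have e : t (i + 1 + 1) = t (i + 2) := congrArg t (by omega)
      omega
    · obtain ⟨i', rfl⟩ : ∃ i', i = i' + 1 := ⟨i - 1, by omega⟩
      have h1 := hmin _ (hgapQ i' (by omega)).1 (hgapQ i' (by omega)).2
      have h2 := hdense i' (by omega)
      have m1 := hmono i' (i' + 1) (by omega) (by omega)
      have m2 := hmono (i' + 1) (i' + 2) (by omega) (by omega)
      have e : t (i' + 1 + 1) = t (i' + 2) := congrArg t (by omega)
      omega
  -- d divides each gap
  have hdvd : ∀ i, i + 1 < h → d ∣ (t (i + 1) - t i) := by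
    intro i hi
    have hQg := hgapQ i hi
    have hgcd := fw (f := fun j => u[j]?) (n := n) (d + (t (i + 1) - t i)) d
      (t (i + 1) - t i) le_rfl (hsum i hi) hdper hQg.2
    have hgp : 0 < Nat.gcd d (t (i + 1) - t i) := Nat.gcd_pos_of_pos_left _ hdpos
    have hle : d ≤ Nat.gcd d (t (i + 1) - t i) := hmin _ hgp hgcd
    have hge : Nat.gcd d (t (i + 1) - t i) ≤ d :=
      Nat.le_of_dvd hdpos (Nat.gcd_dvd_left _ _)
    have heq : Nat.gcd d (t (i + 1) - t i) = d := le_antisymm hge hle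
    rw [← heq]; exact Nat.gcd_dvd_right _ _
  -- iterated period
  have hPmul : ∀ m x, x + m * d < n → u[x]? = u[x + m * d]? := by
    intro m
    induction m with
    | zero => simp
    | succ m ih =>
      intro x hx
      have hmd : (m + 1) * d = m * d + d := by ring
      have h1 := ih x (by omega)
      have h2 := hdper (x + m * d) (by omega)
      have e : x + m * d + d = x + (m + 1) * d := by ring
      rw [e] at h2
      rw [h1, h2]
  -- each gap equals d
  have hgapeq : ∀ i, i + 1 < h → t (i + 1) - t i = d := by
    intro i hi
    obtain ⟨k, hk⟩ := hdvd i hi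
    have hmono' : t i < t (i + 1) := hmono i (i + 1) (by omega) hi
    rcases Nat.lt_or_ge k 2 with hk1 | hk2
    · interval_cases k <;> omega
    -- k ≥ 2 : contradiction via an extra occurrence at t i + d
    exfalso
    obtain ⟨k', rfl⟩ : ∃ k', k = k' + 2 := ⟨k - 2, by omega⟩
    have hgk : t (i + 1) - t i = d * k' + d + d := by rw [hk]; ring
    have hsumi := hsum i hi
    have hocc2 : (v.drop (t i + d)).take n = u ∧ t i + d + n ≤ v.length := by
      constructor
      · apply List.ext_getElem?
        intro j
        rw [List.getElem?_take]
        by_cases hj : j < n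
        · rw [if_pos hj, List.getElem?_drop]
          by_cases hjd : j + d < n
          · have e1 := hoccget i (by omega) (d + j) (by omega)
            have e : t i + (d + j) = t i + d + j := by omega
            rw [e] at e1
            rw [← e1, Nat.add_comm d j]
            exact (hdper j hjd).symm
          · -- j + d ≥ n, so j is at least the gap
            have hx : (k' + 1) * d = d * k' + d := by ring
            have e1 := hoccget (i + 1) hi (j + d - (t (i + 1) - t i)) (by omega)
            have e : t (i + 1) + (j + d - (t (i + 1) - t i)) = t i + d + j := by omega
            rw [e] at e1
            have e3 : j + d - (t (i + 1) - t i) + (k' + 1) * d = j := by omega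
            have e2 := hPmul (k' + 1) (j + d - (t (i + 1) - t i)) (by omega)
            rw [e3] at e2
            rw [← e1, ← e2]
        · rw [if_neg hj, List.getElem?_eq_none (by omega)]
      · have := hbound (i + 1) hi
        omega
    obtain ⟨m, hm, htm⟩ := (hocc (t i + d)).mp hocc2
    rcases Nat.lt_trichotomy m i with hmi | hmi | hmi
    · have := hmono m i hmi (by omega); omega
    · subst hmi; omega
    · rcases Nat.lt_or_ge (i + 1) m with hmi2 | hmi2
      · have := hmono (i + 1) m hmi2 hm; omega
      · have hmeq : m = i + 1 := by omega
        subst hmeq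
        omega
  exact ⟨d, hgapeq, hdpos, hdper, hmin⟩
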